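/- If α and β are ε-chains with the same endpoints in a chain connected metric space X, and there exist stringings α̂ of α and β̂ of β that are path homotopic with fixed endpoints, then α and β are ε-homotopic. -/

import Mathlib

noncomputable section
open Metric

variable {X : Type*} [MetricSpace X]

def IsEpsChain (ε : ℝ) (l : List X) : Prop :=
  l ≠ [] ∧ l.Chain' (fun a b => dist a b < ε)

def chainLength : List X → ℝ
  | a :: b :: t => dist a b + chainLength (b :: t)
  | _ => 0

def conc (α β : List X) : List X := α ++ β.tail

def Insertion (α β : List X) : Prop :=
  ∃ (p s : List X) (x : X), p ≠ [] ∧ s ≠ [] ∧ α = p ++ s ∧ β = p ++ x :: s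

def Move (ε : ℝ) (α β : List X) : Prop :=
  IsEpsChain ε α ∧ IsEpsChain ε β ∧ (Insertion α β ∨ Insertion β α)

def EpsHomotopic (ε : ℝ) : List X → List X → Prop :=
  Relation.ReflTransGen (Move ε)

def IsEpsNull (ε : ℝ) (l : List X) : Prop := ∃ x, EpsHomotopic ε l [x]

def IsGeodesicSpace (Y : Type*) [MetricSpace Y] : Prop :=
  ∀ x y : Y, ∃ γ : ℝ → Y, γ 0 = x ∧ γ (dist x y) = y ∧
    ∀ s ∈ Set.Icc (0:ℝ) (dist x y), ∀ t ∈ Set.Icc (0:ℝ) (dist x y),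
      dist (γ s) (γ t) = |s - t|

def ChainConnected (Y : Type*) [MetricSpace Y] : Prop :=
  ∀ ε > (0:ℝ), ∀ x y : Y, ∃ l : List Y, IsEpsChain ε l ∧ l.head? = some x ∧ l.getLast? = some y

theorem epsHomotopic_equiv (ε : ℝ) : Equivalence (EpsHomotopic (X := X) ε) := by
  refine ⟨fun _ => Relation.ReflTransGen.refl, ?_, fun h h' => h.trans h'⟩
  intro a b h
  induction h with
  | refl => exact Relation.ReflTransGen.refl
  | tail _ hm ih => exact Relation.ReflTransGen.head ⟨hm.2.1, hm.1, hm.2.2.symm⟩ ih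

/-- A stringing of an ε-chain `α`: a path through the points of `α` in order,
whose segment from `x_i` to `x_{i+1}` lies in `B(x_i, ε)`. -/
def IsStringing (ε : ℝ) {x y : X} (α : List X) (c : Path x y) : Prop :=
  ∃ t : ℕ → ℝ, Monotone t ∧ t 0 = 0 ∧ t (α.length - 1) = 1 ∧
    (∀ (i : ℕ) (hi : i < α.length), c.extend (t i) = α.get ⟨i, hi⟩) ∧
    ∀ (i : ℕ) (hi : i + 1 < α.length), ∀ s ∈ Set.Icc (t i) (t (i + 1)),
      c.extend s ∈ Metric.ball (α.get ⟨i, by omega⟩) ε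

set_option linter.unusedSectionVars false

/-! ### chains from index functions -/

def ch (f : ℕ → X) (n : ℕ) : List X := (List.range (n+1)).map f

lemma ch_length (f : ℕ → X) (n : ℕ) : (ch f n).length = n + 1 := by simp [ch]

lemma ch_getElem (f : ℕ → X) (n i : ℕ) (h : i < (ch f n).length) : (ch f n)[i] = f i := by
  simp [ch]

lemma ch_ne_nil (f : ℕ → X) (n : ℕ) : ch f n ≠ [] := by
  simp [ch, List.range_succ]

lemma ch_congr {f g : ℕ → X} {n : ℕ} (h : ∀ i ≤ n, f i = g i) : ch f n = ch g n := by
  apply List.map_congr_left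
  intro i hi
  exact h i (by simpa using Nat.lt_succ_iff.mp (List.mem_range.mp hi))

lemma isEpsChain_ch {ε : ℝ} (f : ℕ → X) (n : ℕ) :
    IsEpsChain ε (ch f n) ↔ ∀ i < n, dist (f i) (f (i+1)) < ε := by
  rw [IsEpsChain, and_iff_right (ch_ne_nil f n)]
  simp only [List.Chain']
  rw [List.isChain_iff_getElem]
  constructor
  · intro h i hi
    have := h i (by simp [ch_length]; omega)
    simpa [List.get_eq_getElem, ch_getElem] using this
  · intro h i hi
    simp only [List.get_eq_getElem, ch_getElem]
    exact h i (by simp [ch_length] at hi; omega)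

lemma map_range'_append (f : ℕ → X) (s m k : ℕ) :
    (List.range' s (m+k)).map f = (List.range' s m).map f ++ (List.range' (s+m) k).map f := by
  rw [← List.map_append]
  congr 1
  rw [add_comm m k]
  have := List.range'_append (s := s) (m := m) (n := k) (step := 1)
  rw [Nat.add_comm k m]
  simpa using this.symm

lemma map_range'_cons (f : ℕ → X) (s m : ℕ) :
    (List.range' s (m+1)).map f = f s :: (List.range' (s+1) m).map f := by
  rw [List.range'_succ]; simp

lemma ch_split (f : ℕ → X) (n k : ℕ) (h : k ≤ n) :
    ch f n = (List.range k).map f ++ (List.range' k (n+1-k)).map f := by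
  rw [ch, List.range_eq_range']
  have : n + 1 = k + (n+1-k) := by omega
  rw [this, map_range'_append, List.range_eq_range']
  simp

lemma ch_split2 (f : ℕ → X) (n k : ℕ) (h : k + 1 ≤ n) :
    ch f n = (List.range k).map f ++ f k :: f (k+1) :: (List.range' (k+2) (n-k-1)).map f := by
  rw [ch_split f n k (by omega)]
  have h1 : n + 1 - k = (n - k - 1) + 1 + 1 := by omega
  rw [h1, map_range'_cons, map_range'_cons]

/-! ### elementary moves -/

lemma chain'_append_cons {R : X → X → Prop} (p : List X) (a : X) (s : List X) :
    List.Chain' R (p ++ a :: s) ↔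
      List.Chain' R p ∧ (∀ z ∈ p.getLast?, R z a) ∧ List.Chain' R (a :: s) := by
  simp only [List.Chain']
  rw [List.isChain_append]
  simp only [List.head?_cons]
  constructor
  · rintro ⟨h1, h2, h3⟩
    exact ⟨h1, fun z hz => h3 z hz a rfl, h2⟩
  · rintro ⟨h1, h2, h3⟩
    exact ⟨h1, h3, fun z hz y hy => by cases hy; exact h2 z hz⟩

lemma chain'_middle {R : X → X → Prop} {p : List X} {a z : X} {s : List X}
    (h : List.Chain' R (p ++ a :: z :: s)) (h2 : ∀ w ∈ s.head?, R a w) :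
    List.Chain' R (p ++ a :: s) := by
  rw [chain'_append_cons] at h ⊢
  obtain ⟨h1, h3, h4⟩ := h
  refine ⟨h1, h3, ?_⟩
  simp only [List.Chain'] at h4 ⊢
  rw [List.isChain_cons] at h4 ⊢
  exact ⟨h2, h4.2.tail⟩

lemma chain'_insert_mid {R : X → X → Prop} {p : List X} {a c b : X} {s : List X}
    (h : List.Chain' R (p ++ a :: b :: s)) (hac : R a c) (hcb : R c b) :
    List.Chain' R (p ++ a :: c :: b :: s) := by
  rw [chain'_append_cons] at h ⊢
  obtain ⟨h1, h3, h4⟩ := h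
  exact ⟨h1, h3, List.IsChain.cons_cons hac (List.IsChain.cons_cons hcb h4.tail)⟩

lemma epsHomotopic_insert {ε : ℝ} (p s : List X) (a b c : X)
    (h : IsEpsChain ε (p ++ a :: b :: s)) (hac : dist a c < ε) (hcb : dist c b < ε) :
    EpsHomotopic ε (p ++ a :: b :: s) (p ++ a :: c :: b :: s) ∧
      IsEpsChain ε (p ++ a :: c :: b :: s) := by
  have h2 : IsEpsChain ε (p ++ a :: c :: b :: s) :=
    ⟨by simp, chain'_insert_mid h.2 hac hcb⟩
  refine ⟨Relation.ReflTransGen.single ⟨h, h2, Or.inl ?_⟩, h2⟩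
  exact ⟨p ++ [a], b :: s, c, by simp, by simp, by simp, by simp⟩

lemma epsHomotopic_delete {ε : ℝ} (p s : List X) (a b : X)
    (h : IsEpsChain ε (p ++ a :: b :: s)) (hs : s ≠ [])
    (has : ∀ w ∈ s.head?, dist a w < ε) :
    EpsHomotopic ε (p ++ a :: b :: s) (p ++ a :: s) ∧ IsEpsChain ε (p ++ a :: s) := by
  have h2 : IsEpsChain ε (p ++ a :: s) := ⟨by simp, chain'_middle h.2 has⟩
  refine ⟨Relation.ReflTransGen.single ⟨h, h2, Or.inr ?_⟩, h2⟩
  exact ⟨p ++ [a], s, b, by simp, hs, by simp, by simp⟩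

lemma epsHomotopic_collapse {ε : ℝ} (p : List X) (a b : X) (s : List X) : ∀ (m : List X),
    IsEpsChain ε (p ++ a :: (m ++ b :: s)) →
    (∀ z ∈ m, dist a z < ε) → dist a b < ε →
    EpsHomotopic ε (p ++ a :: (m ++ b :: s)) (p ++ a :: b :: s)
  | [], h, _, _ => Relation.ReflTransGen.refl
  | z :: m, h, hm, hab => by
    have hd := epsHomotopic_delete p (m ++ b :: s) a z (by simpa using h)
      (by simp) (by
        intro w hw
        rcases m with _ | ⟨z', m'⟩
        · simp at hw; subst hw; exact hab
        · simp at hw; subst hw; exact hm z' (by simp))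
    exact Relation.ReflTransGen.trans hd.1
      (epsHomotopic_collapse p a b s m hd.2 (fun z hz => hm z (by simp [hz])) hab)

/-! ### deformation between nearby chains -/

lemma epsHomotopic_deform {ε : ℝ} (A B : ℕ → X) (n : ℕ)
    (hA : ∀ i < n, dist (A i) (A (i+1)) < ε)
    (hB : ∀ i < n, dist (B i) (B (i+1)) < ε)
    (hAB : ∀ i ≤ n, dist (A i) (B i) < ε)
    (hcross : ∀ i < n, dist (B i) (A (i+1)) < ε)
    (h0 : A 0 = B 0) (hn : A n = B n) :
    EpsHomotopic ε (ch A n) (ch B n) := by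
  rcases Nat.eq_zero_or_pos n with rfl | hnpos
  · rw [show ch A 0 = ch B 0 from ch_congr (by intro i hi; interval_cases i; exact h0)]
    exact Relation.ReflTransGen.refl
  set F : ℕ → ℕ → X := fun i j => if j ≤ i then B j else A j with hF
  have hFlist : ∀ i, i + 1 ≤ n → ch (F i) n =
      (List.range i).map B ++ B i :: A (i+1) :: (List.range' (i+2) (n-i-1)).map A := by
    intro i hi
    rw [ch_split2 (F i) n i hi]
    congr 1
    · apply List.map_congr_left
      intro j hj
      simp only [List.mem_range] at hj
      simp [hF, Nat.le_of_lt hj, le_of_lt hj]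
    · congr 1
      · simp [hF]
      congr 1
      · simp [hF]
      apply List.map_congr_left
      intro j hj
      have hij : i + 2 ≤ j := (List.mem_range'_1.mp hj).1
      have hji : ¬ j ≤ i := by omega
      simp [hF, hji]
  have hFchain : ∀ i, IsEpsChain ε (ch (F i) n) := by
    intro i
    rw [isEpsChain_ch]
    intro j hj
    simp only [hF]
    split_ifs with h1 h2 h2
    · exact hB j hj
    · have : j = i := by omega
      subst this; exact hcross j hj
    · omega
    · exact hA j hj
  have key : ∀ i, i ≤ n - 1 → EpsHomotopic ε (ch (F 0) n) (ch (F i) n) := by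
    intro i
    induction i with
    | zero => intro _; exact Relation.ReflTransGen.refl
    | succ i ih =>
      intro hi
      refine Relation.ReflTransGen.trans (ih (by omega)) ?_
      have hi1 : i + 1 ≤ n := by omega
      rw [hFlist i hi1]
      have hins := epsHomotopic_insert ((List.range i).map B)
        ((List.range' (i+2) (n-i-1)).map A) (B i) (A (i+1)) (B (i+1))
        (by rw [← hFlist i hi1]; exact hFchain i)
        (hB i (by omega)) (by rw [dist_comm]; exact hAB (i+1) (by omega))
      refine Relation.ReflTransGen.trans hins.1 ?_
      by_cases hend : i + 2 ≤ n
      · have hSne : (List.range' (i+2) (n-i-1)).map A ≠ [] := by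
          have : n - i - 1 = (n-i-2) + 1 := by omega
          rw [this, map_range'_cons]; simp
        have heq1 : (List.range i).map B ++ B i :: B (i+1) :: A (i+1) ::
            (List.range' (i+2) (n-i-1)).map A
            = ((List.range i).map B ++ [B i]) ++ B (i+1) :: A (i+1) ::
            (List.range' (i+2) (n-i-1)).map A := by simp
        rw [heq1]
        have hdel := epsHomotopic_delete ((List.range i).map B ++ [B i])
          ((List.range' (i+2) (n-i-1)).map A) (B (i+1)) (A (i+1))
          (by rw [← heq1]; exact hins.2) hSne
          (by
            intro w hw
            have h2 : n - i - 1 = (n-i-2) + 1 := by omega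
            rw [h2, map_range'_cons] at hw
            simp only [List.head?_cons, Option.mem_def, Option.some.injEq] at hw
            subst hw
            exact hcross (i+1) (by omega))
        refine Relation.ReflTransGen.trans hdel.1 ?_
        have : ((List.range i).map B ++ [B i]) ++ B (i+1) ::
            (List.range' (i+2) (n-i-1)).map A = ch (F (i+1)) n := by
          have h2 : n - i - 1 = (n-i-2) + 1 := by omega
          rw [hFlist (i+1) (by omega), h2, map_range'_cons]
          rw [List.range_succ]
          simp
          congr 1 <;> omega
        rw [this]
      · omega
  have hfin : ch (F (n-1)) n = ch B n := by
    apply ch_congr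
    intro j hj
    simp only [hF]
    split_ifs with h1
    · rfl
    · have : j = n := by omega
      subst this; exact hn
  have hstart : ch (F 0) n = ch A n := by
    apply ch_congr
    intro j hj
    simp only [hF]
    split_ifs with h1
    · have : j = 0 := by omega
      subst this; exact h0.symm
    · rfl
  rw [← hstart, ← hfin]
  exact key (n-1) le_rfl

/-! ### chain'-of-range helpers -/

lemma chain'_map_range {R : X → X → Prop} (f : ℕ → X) (m : ℕ)
    (h : ∀ j, j+1 < m → R (f j) (f (j+1))) :
    List.Chain' R ((List.range m).map f) := by
  simp only [List.Chain']
  rw [List.isChain_iff_getElem]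
  intro i hi
  simp only [List.length_map, List.length_range] at hi
  simp only [List.get_eq_getElem, List.getElem_map, List.getElem_range]
  exact h i (by omega)

lemma chain'_map_range' {R : X → X → Prop} (f : ℕ → X) (s m : ℕ)
    (h : ∀ j, j+1 < m → R (f (s+j)) (f (s+j+1))) :
    List.Chain' R ((List.range' s m).map f) := by
  simp only [List.Chain']
  rw [List.isChain_iff_getElem]
  intro i hi
  simp only [List.length_map, List.length_range'] at hi
  simp only [List.get_eq_getElem, List.getElem_map, List.getElem_range']
  have := h i (by omega)
  simpa [Nat.add_assoc] using this

lemma getLast?_map_range (f : ℕ → X) (m : ℕ) (hm : 0 < m) :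
    ((List.range m).map f).getLast? = some (f (m-1)) := by
  have : m = (m-1) + 1 := by omega
  rw [this, List.range_succ]
  simp

/-! ### sampling lemma -/

lemma epsHomotopic_sample {ε : ℝ} (a g : ℕ → X) (n N : ℕ) (φ : ℕ → ℕ)
    (hN : 1 ≤ N)
    (hg : ∀ k < N, dist (g k) (g (k+1)) < ε)
    (ha : ∀ i < n, dist (a i) (a (i+1)) < ε)
    (hφmono : ∀ i < n, φ i ≤ φ (i+1))
    (hφN : ∀ i ≤ n, φ i ≤ N)
    (hφ0 : φ 0 = 0) (hφn : φ n = N)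
    (hagree : ∀ i ≤ n, g (φ i) = a i)
    (hball : ∀ i < n, ∀ k, φ i ≤ k → k ≤ φ (i+1) → dist (a i) (g k) < ε) :
    EpsHomotopic ε (ch g N) (ch a n) := by
  set D : ℕ → List X := fun i =>
    (List.range i).map a ++ (List.range' (φ i) (N + 1 - φ i)).map g with hD
  -- each D i is an ε-chain
  have hDchain : ∀ i ≤ n, IsEpsChain ε (D i) := by
    intro i hi
    constructor
    · have h1 : N + 1 - φ i = (N - φ i) + 1 := by have := hφN i hi; omega
      simp [hD, h1, map_range'_cons]
    simp only [List.Chain']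
    rw [List.isChain_append]
    refine ⟨chain'_map_range a i (fun j hj => ?_), ?_, ?_⟩
    · exact ha j (by omega)
    · apply chain'_map_range'
      intro j hj
      have hj2 : φ i + j + 1 ≤ N := by omega
      exact hg (φ i + j) (by omega)
    · intro z hz w hw
      rcases Nat.eq_zero_or_pos i with rfl | hipos
      · simp at hz
      rw [getLast?_map_range a i hipos] at hz
      have h1 : N + 1 - φ i = (N - φ i) + 1 := by have := hφN i hi; omega
      rw [h1, map_range'_cons] at hw
      simp only [Option.mem_def, Option.some.injEq, List.head?_cons] at hz hw
      subst hz; subst hw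
      rw [hagree i hi]
      have := ha (i-1) (by omega)
      rwa [show i - 1 + 1 = i from by omega] at this
  -- endpoints
  have hD0 : D 0 = ch g N := by
    simp [hD, hφ0, ch, List.range_eq_range']
  have hDn : D n = ch a n := by
    simp only [hD, hφn]
    have h1 : N + 1 - N = 0 + 1 := by omega
    rw [h1, map_range'_cons]
    have h2 : g N = a n := by rw [← hφn]; exact hagree n le_rfl
    rw [ch, List.range_succ]
    simp [h2]
  -- the step
  have hstep : ∀ i < n, EpsHomotopic ε (D i) (D (i+1)) := by
    intro i hi
    have hφi := hφN i (by omega)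
    have hφi1 := hφN (i+1) (by omega)
    have hmon := hφmono i hi
    rcases Nat.lt_or_ge (φ i) (φ (i+1)) with hlt | hge
    · -- collapse the samples strictly between φ i and φ (i+1)
      have hsplit : (List.range' (φ i) (N + 1 - φ i)).map g =
          g (φ i) :: ((List.range' (φ i + 1) (φ (i+1) - φ i - 1)).map g ++
            g (φ (i+1)) :: (List.range' (φ (i+1) + 1) (N - φ (i+1))).map g) := by
        have e1 : N + 1 - φ i = ((φ (i+1) - φ i - 1) + (N + 1 - φ (i+1))) + 1 := by omega
        rw [e1, map_range'_cons, map_range'_append]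
        have e2 : φ i + 1 + (φ (i+1) - φ i - 1) = φ (i+1) := by omega
        rw [e2]
        have e3 : N + 1 - φ (i+1) = (N - φ (i+1)) + 1 := by omega
        rw [e3, map_range'_cons]
      have hDi : D i = (List.range i).map a ++ a i ::
          ((List.range' (φ i + 1) (φ (i+1) - φ i - 1)).map g ++ a (i+1) ::
            (List.range' (φ (i+1) + 1) (N - φ (i+1))).map g) := by
        rw [hD]
        simp only
        rw [hsplit, hagree i (by omega), hagree (i+1) (by omega)]
      have hDi1 : D (i+1) = (List.range i).map a ++ a i :: a (i+1) ::
            (List.range' (φ (i+1) + 1) (N - φ (i+1))).map g := by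
        rw [hD]
        simp only
        have e3 : N + 1 - φ (i+1) = (N - φ (i+1)) + 1 := by omega
        rw [e3, map_range'_cons, List.range_succ, hagree (i+1) (by omega)]
        simp
      rw [hDi, hDi1]
      apply epsHomotopic_collapse
      · rw [← hDi]; exact hDchain i (by omega)
      · intro z hz
        simp only [List.mem_map, List.mem_range'_1] at hz
        obtain ⟨k, ⟨hk1, hk2⟩, rfl⟩ := hz
        exact hball i hi k (by omega) (by omega)
      · exact ha i hi
    · -- φ (i+1) = φ i : insert a duplicate point
      have heq : φ (i+1) = φ i := by omega
      rcases Nat.lt_or_ge (φ i) N with hlt2 | hge2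
      · -- s nonempty after the duplicated point
        have e3 : N + 1 - φ i = (N - φ i) + 1 := by omega
        have hDi : D i = ((List.range i).map a ++ [a i]) ++
            (List.range' (φ i + 1) (N - φ i)).map g := by
          rw [hD]; simp only
          rw [e3, map_range'_cons, hagree i (by omega)]
          simp
        have hDi1 : D (i+1) = ((List.range i).map a ++ [a i]) ++ a i ::
            (List.range' (φ i + 1) (N - φ i)).map g := by
          rw [hD]; simp only
          rw [heq, e3, map_range'_cons, List.range_succ]
          have : g (φ i) = a i := hagree i (by omega)
          simp [this]
        refine Relation.ReflTransGen.single ⟨?_, ?_, Or.inl ?_⟩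
        · exact hDchain i (by omega)
        · exact hDchain (i+1) (by omega)
        refine ⟨(List.range i).map a ++ [a i],
          (List.range' (φ i + 1) (N - φ i)).map g, a i, by simp, ?_, hDi, hDi1⟩
        have : N - φ i = (N - φ i - 1) + 1 := by omega
        rw [this, map_range'_cons]
        simp
      · -- φ i = N, so i ≥ 1 and the tail is just [g N]
        have hφiN : φ i = N := by omega
        have hipos : 1 ≤ i := by
          by_contra h
          have hi0 : i = 0 := by omega
          rw [hi0, hφ0] at hφiN
          omega
        have e3 : N + 1 - φ i = 0 + 1 := by omega
        have hDi : D i = (List.range i).map a ++ [g N] := by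
          rw [hD]; simp only
          rw [e3, map_range'_cons, hφiN]
          simp
        have hDi1 : D (i+1) = (List.range i).map a ++ a i :: [g N] := by
          rw [hD]; simp only
          rw [heq, e3, map_range'_cons, hφiN, List.range_succ]
          have : a i = g N := by rw [← hφiN, hagree i (by omega)]
          simp [this]
        refine Relation.ReflTransGen.single ⟨?_, ?_, Or.inl ?_⟩
        · exact hDchain i (by omega)
        · exact hDchain (i+1) (by omega)
        refine ⟨(List.range i).map a, [g N], a i, ?_, by simp, hDi, hDi1⟩
        have : i = (i-1) + 1 := by omega
        rw [this, List.range_succ]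
        simp
  -- assemble
  have key : ∀ i ≤ n, EpsHomotopic ε (D 0) (D i) := by
    intro i
    induction i with
    | zero => intro _; exact Relation.ReflTransGen.refl
    | succ i ih =>
      intro hi
      exact Relation.ReflTransGen.trans (ih (by omega)) (hstep i (by omega))
  rw [← hD0, ← hDn]
  exact key n le_rfl

/-! ### sorted list facts -/

lemma sortedL_lt (L : List ℝ) (hLn : L.Nodup) (hLs : L.Pairwise (· ≤ ·)) :
    ∀ j k, j < k → k < L.length → L.getD j 1 < L.getD k 1 := by
  intro j k hjk hk
  rw [List.getD_eq_getElem L 1 (by omega), List.getD_eq_getElem L 1 hk]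
  have hle : L[j] ≤ L[k] := by
    have := List.pairwise_iff_get.mp hLs ⟨j, by omega⟩ ⟨k, hk⟩ hjk
    simpa using this
  have hne : L[j] ≠ L[k] := by
    intro h
    have := List.nodup_iff_injective_get.mp hLn
      (show L.get ⟨j, by omega⟩ = L.get ⟨k, hk⟩ by simpa using h)
    simp only [Fin.mk.injEq] at this
    omega
  exact lt_of_le_of_ne hle hne

lemma sortedL_mono (L : List ℝ) (hLn : L.Nodup) (hLs : L.Pairwise (· ≤ ·))
    (hb : ∀ z ∈ L, z ≤ 1) : Monotone (fun k => L.getD k 1) := by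
  intro j k hjk
  simp only
  rcases eq_or_lt_of_le hjk with rfl | hlt
  · exact le_rfl
  rcases Nat.lt_or_ge k L.length with hk | hk
  · exact le_of_lt (sortedL_lt L hLn hLs j k hlt hk)
  · rw [List.getD_eq_default L 1 hk]
    rcases Nat.lt_or_ge j L.length with hj | hj
    · rw [List.getD_eq_getElem L 1 hj]
      exact hb _ (List.getElem_mem hj)
    · rw [List.getD_eq_default L 1 hj]

lemma sortedL_inj (L : List ℝ) (hLn : L.Nodup) (hLs : L.Pairwise (· ≤ ·)) :
    ∀ j k, j < L.length → k < L.length → L.getD j 1 = L.getD k 1 → j = k := by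
  intro j k hj hk h
  rcases Nat.lt_trichotomy j k with hlt | heq | hgt
  · exact absurd h (ne_of_lt (sortedL_lt L hLn hLs j k hlt hk))
  · exact heq
  · exact absurd h.symm (ne_of_lt (sortedL_lt L hLn hLs k j hgt hj))

lemma sortedL_zero (L : List ℝ) (hLn : L.Nodup) (hLs : L.Pairwise (· ≤ ·))
    (hb0 : ∀ z ∈ L, 0 ≤ z) (h0 : (0:ℝ) ∈ L) : L.getD 0 1 = 0 := by
  obtain ⟨j, hj, hLj⟩ := List.mem_iff_getElem.mp h0
  rcases Nat.eq_zero_or_pos j with rfl | hjpos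
  · rw [List.getD_eq_getElem L 1 hj, hLj]
  · have h1 := sortedL_lt L hLn hLs 0 j hjpos hj
    rw [List.getD_eq_getElem L 1 hj, hLj] at h1
    have h2 : 0 ≤ L.getD 0 1 := by
      rw [List.getD_eq_getElem L 1 (by omega)]
      exact hb0 _ (List.getElem_mem (by omega))
    linarith

lemma sortedL_last (L : List ℝ) (hLn : L.Nodup) (hLs : L.Pairwise (· ≤ ·))
    (hb : ∀ z ∈ L, z ≤ 1) (h1 : (1:ℝ) ∈ L) : L.getD (L.length - 1) 1 = 1 := by
  obtain ⟨j, hj, hLj⟩ := List.mem_iff_getElem.mp h1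
  rcases Nat.lt_or_ge j (L.length - 1) with hlt | hge
  · have h2 := sortedL_lt L hLn hLs j (L.length - 1) hlt (by omega)
    rw [List.getD_eq_getElem L 1 hj, hLj] at h2
    have h3 : L.getD (L.length - 1) 1 ≤ 1 := by
      rw [List.getD_eq_getElem L 1 (by omega)]
      exact hb _ (List.getElem_mem (by omega))
    linarith
  · have : j = L.length - 1 := by omega
    subst this
    rw [List.getD_eq_getElem L 1 hj, hLj]

/-! ### one side: a chain is ε-homotopic to a fine sampling of its stringing -/

lemma sample_side {ε : ℝ} (hε : 0 < ε) {x y : X} (α : List X) (hα : IsEpsChain ε α)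
    (c : Path x y) (t : ℕ → ℝ) (htm : Monotone t) (ht0 : t 0 = 0) (ht1 : t (α.length - 1) = 1)
    (htpt : ∀ (i : ℕ) (hi : i < α.length), c.extend (t i) = α.get ⟨i, hi⟩)
    (htball : ∀ (i : ℕ) (hi : i + 1 < α.length), ∀ s ∈ Set.Icc (t i) (t (i + 1)),
      c.extend s ∈ Metric.ball (α.get ⟨i, by omega⟩) ε)
    (L : List ℝ) (hLn : L.Nodup) (hLs : L.Pairwise (· ≤ ·))
    (hb0 : ∀ z ∈ L, 0 ≤ z) (hb1 : ∀ z ∈ L, z ≤ 1)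
    (hmemt : ∀ i < α.length, t i ∈ L)
    (hfine : ∀ k, k < L.length - 1 →
      dist (c.extend (L.getD k 1)) (c.extend (L.getD (k+1) 1)) < ε)
    (hN1 : 1 ≤ L.length - 1)
    (d : X) :
    EpsHomotopic ε (ch (fun k => c.extend (L.getD k 1)) (L.length - 1)) α := by
  set u : ℕ → ℝ := fun k => L.getD k 1 with hu
  set N := L.length - 1 with hNdef
  have hlpos : 0 < α.length := List.length_pos_iff.mpr hα.1
  have hl2 : 2 ≤ α.length := by
    by_contra h
    have h1 : α.length = 1 := by omega
    rw [h1] at ht1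
    simp only [Nat.sub_self] at ht1
    rw [ht0] at ht1
    norm_num at ht1
  set n := α.length - 1 with hn
  set aF : ℕ → X := fun i => α.getD i d with haF
  have hach : α = ch aF n := by
    apply List.ext_getElem
    · rw [ch_length]; omega
    · intro i h1 h2
      rw [ch_getElem]
      exact (List.getD_eq_getElem α d h1).symm
  have hLpos : 0 < L.length := by omega
  -- t-values are in L and their indices behave well
  set φ : ℕ → ℕ := fun i => L.idxOf (t i) with hφ
  have hφlt : ∀ i < α.length, φ i < L.length := by
    intro i hi
    exact List.idxOf_lt_length_iff.mpr (hmemt i hi)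
  have huφ : ∀ i < α.length, u (φ i) = t i := by
    intro i hi
    rw [hu]
    simp only
    rw [List.getD_eq_getElem L 1 (hφlt i hi)]
    exact List.getElem_idxOf (hφlt i hi)
  have hu0 : u 0 = 0 := sortedL_zero L hLn hLs hb0 (by rw [← ht0]; exact hmemt 0 (by omega))
  have huN : u N = 1 := sortedL_last L hLn hLs hb1 (by rw [← ht1]; exact hmemt (α.length - 1) (by omega))
  have humono : Monotone u := sortedL_mono L hLn hLs hb1
  -- apply the sampling lemma
  rw [hach]
  apply epsHomotopic_sample aF (fun k => c.extend (u k)) n N φ hN1 hfine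
  · -- α is a chain
    intro i hi
    have := List.isChain_iff_getElem.mp hα.2 i (by omega)
    rw [haF]
    simp only
    rw [List.getD_eq_getElem α d (by omega), List.getD_eq_getElem α d (by omega)]
    exact this
  · -- φ monotone
    intro i hi
    by_contra h
    have h2 : u (φ (i+1)) < u (φ i) :=
      sortedL_lt L hLn hLs (φ (i+1)) (φ i) (by omega) (hφlt i (by omega))
    rw [huφ i (by omega), huφ (i+1) (by omega)] at h2
    exact absurd (htm (by omega : i ≤ i + 1)) (not_le.mpr h2)
  · -- φ bounded
    intro i hi
    have := hφlt i (by omega)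
    omega
  · -- φ 0 = 0
    apply sortedL_inj L hLn hLs _ _ (hφlt 0 (by omega)) hLpos
    show u (φ 0) = u 0
    rw [huφ 0 (by omega), ht0, hu0]
  · -- φ n = N
    apply sortedL_inj L hLn hLs _ _ (hφlt n (by omega)) (by omega)
    show u (φ n) = u N
    rw [huφ n (by omega), ht1, huN]
  · -- agreement
    intro i hi
    rw [huφ i (by omega), htpt i (by omega), haF]
    simp only [List.get_eq_getElem]
    rw [List.getD_eq_getElem α d (by omega)]
  · -- ball condition
    intro i hi k hk1 hk2
    have hmem : u k ∈ Set.Icc (t i) (t (i+1)) := by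
      constructor
      · rw [← huφ i (by omega)]; exact humono hk1
      · rw [← huφ (i+1) (by omega)]; exact humono hk2
    have := htball i (by omega) (u k) hmem
    rw [Metric.mem_ball] at this
    rw [dist_comm, haF]
    simp only
    rw [List.getD_eq_getElem α d (by omega)]
    simpa using this

/-! ### mesh estimate for the sorted partition -/

lemma sortedL_mesh (L : List ℝ) (hLn : L.Nodup) (hLs : L.Pairwise (· ≤ ·))
    (M : ℕ) (hMR : (0:ℝ) < M)
    (hb0 : ∀ z ∈ L, 0 ≤ z) (hb1 : ∀ z ∈ L, z ≤ 1)
    (hgrid : ∀ r : ℕ, r ≤ M → ((r:ℝ)/M) ∈ L) :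
    ∀ k, k + 1 < L.length → L.getD (k+1) 1 - L.getD k 1 ≤ 1 / M := by
  intro k hk
  by_contra hgap
  push_neg at hgap
  set uk := L.getD k 1 with huk
  set uk1 := L.getD (k+1) 1 with huk1
  have hkl : k < L.length := by omega
  have hmemk : uk ∈ L := by rw [huk, List.getD_eq_getElem L 1 hkl]; exact List.getElem_mem hkl
  have hmemk1 : uk1 ∈ L := by
    rw [huk1, List.getD_eq_getElem L 1 hk]; exact List.getElem_mem hk
  have h0k : 0 ≤ uk := hb0 _ hmemk
  have h1k1 : uk1 ≤ 1 := hb1 _ hmemk1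
  have hklt : uk < uk1 := sortedL_lt L hLn hLs k (k+1) (by omega) hk
  set r : ℕ := ⌊uk * M⌋₊ + 1 with hr
  have h1 : uk * M < r := by rw [hr]; push_cast; exact Nat.lt_floor_add_one _
  have h2 : (r:ℝ) ≤ uk * M + 1 := by
    rw [hr]; push_cast
    have := Nat.floor_le (by positivity : (0:ℝ) ≤ uk * M)
    linarith
  have hrM : r ≤ M := by
    have hlt1 : uk < 1 := lt_of_lt_of_le hklt h1k1
    have : uk * M < 1 * M := by
      apply mul_lt_mul_of_pos_right hlt1 hMR
    rw [one_mul] at this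
    have hfl : ⌊uk * M⌋₊ < M := by
      rw [Nat.floor_lt (by positivity)]
      exact_mod_cast this
    omega
  set g : ℝ := (r:ℝ)/M with hg
  have hgmem : g ∈ L := hgrid r hrM
  have hukg : uk < g := by
    rw [hg, lt_div_iff₀ hMR]
    exact h1
  have hgug : g < uk1 := by
    have : g ≤ uk + 1/M := by
      rw [hg, div_le_iff₀ hMR]
      have : (uk + 1/M) * M = uk * M + 1 := by field_simp
      rw [this]
      exact h2
    linarith
  obtain ⟨j, hj, hLj⟩ := List.mem_iff_getElem.mp hgmem
  have hLjg : L.getD j 1 = g := by rw [List.getD_eq_getElem L 1 hj, hLj]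
  rcases Nat.lt_or_ge j (k+1) with hjk | hjk
  · -- j ≤ k, so g ≤ uk
    have : g ≤ uk := by
      rcases Nat.lt_or_ge j k with h | h
      · exact le_of_lt (hLjg ▸ sortedL_lt L hLn hLs j k h hkl)
      · have : j = k := by omega
        subst this; rw [← hLjg, huk]
    linarith
  · -- j ≥ k+1, so uk1 ≤ g
    have : uk1 ≤ g := by
      rcases Nat.lt_or_ge (k+1) j with h | h
      · exact le_of_lt (hLjg ▸ sortedL_lt L hLn hLs (k+1) j h hj)
      · have : j = k + 1 := by omega
        subst this; rw [← hLjg, huk1]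
    linarith

open unitInterval

/-- If chains admit path-homotopic stringings, they are ε-homotopic. -/
theorem statement16 (hX : ChainConnected X) (ε : ℝ) (hε : 0 < ε) {x y : X}
    (α β : List X) (hα : IsEpsChain ε α) (hβ : IsEpsChain ε β)
    (hαh : α.head? = some x) (hβh : β.head? = some x)
    (hαl : α.getLast? = some y) (hβl : β.getLast? = some y)
    (cα cβ : Path x y) (hsα : IsStringing ε α cα) (hsβ : IsStringing ε β cβ)
    (hhom : cα.Homotopic cβ) :
    EpsHomotopic ε α β := by
  classical
  obtain ⟨t, htm, ht0, ht1, htpt, htball⟩ := hsα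
  obtain ⟨t', htm', ht0', ht1', htpt', htball'⟩ := hsβ
  obtain ⟨H⟩ := hhom
  have hUC : UniformContinuous (⇑H) := CompactSpace.uniformContinuous_of_continuous H.continuous
  obtain ⟨δ, hδ, hHd⟩ := Metric.uniformContinuous_iff.mp hUC (ε/2) (half_pos hε)
  obtain ⟨M0, hM0⟩ := exists_nat_one_div_lt hδ
  set M : ℕ := M0 + 1 with hM
  have hMR : (0:ℝ) < M := by rw [hM]; push_cast; positivity
  have hMδ : 1 / (M:ℝ) < δ := by rw [hM]; push_cast; exact hM0
  have hlα : 0 < α.length := List.length_pos_iff.mpr hα.1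
  have hlβ : 0 < β.length := List.length_pos_iff.mpr hβ.1
  have htb : ∀ i < α.length, 0 ≤ t i ∧ t i ≤ 1 := fun i hi =>
    ⟨ht0 ▸ htm (Nat.zero_le i), ht1 ▸ htm (by omega : i ≤ α.length - 1)⟩
  have htb' : ∀ i < β.length, 0 ≤ t' i ∧ t' i ≤ 1 := fun i hi =>
    ⟨ht0' ▸ htm' (Nat.zero_le i), ht1' ▸ htm' (by omega : i ≤ β.length - 1)⟩
  -- the common partition
  set T : List ℝ := ((List.range α.length).map t ++ (List.range β.length).map t' ++
    (List.range (M+1)).map (fun r : ℕ => (r:ℝ)/(M:ℝ))).dedup with hT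
  set L : List ℝ := T.insertionSort (· ≤ ·) with hL
  have hperm : L.Perm T := List.perm_insertionSort _ _
  have hLs : L.Pairwise (· ≤ ·) := List.pairwise_insertionSort _ _
  have hLn : L.Nodup := (hperm.nodup_iff).mpr (List.nodup_dedup _)
  have hmem : ∀ z : ℝ, z ∈ L ↔ ((∃ i < α.length, t i = z) ∨ (∃ i < β.length, t' i = z) ∨
      (∃ r ≤ M, (r:ℝ)/M = z)) := by
    intro z
    rw [hperm.mem_iff, hT, List.mem_dedup]
    simp only [List.mem_append, List.mem_map, List.mem_range]
    constructor
    · rintro ((⟨i, hi, rfl⟩ | ⟨i, hi, rfl⟩) | ⟨r, hr, rfl⟩)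
      · exact Or.inl ⟨i, hi, rfl⟩
      · exact Or.inr (Or.inl ⟨i, hi, rfl⟩)
      · exact Or.inr (Or.inr ⟨r, Nat.lt_succ_iff.mp hr, rfl⟩)
    · rintro (⟨i, hi, rfl⟩ | ⟨i, hi, rfl⟩ | ⟨r, hr, rfl⟩)
      · exact Or.inl (Or.inl ⟨i, hi, rfl⟩)
      · exact Or.inl (Or.inr ⟨i, hi, rfl⟩)
      · exact Or.inr ⟨r, Nat.lt_succ_iff.mpr hr, rfl⟩
  have hb0 : ∀ z ∈ L, 0 ≤ z := by
    intro z hz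
    rcases (hmem z).mp hz with ⟨i, hi, rfl⟩ | ⟨i, hi, rfl⟩ | ⟨r, hr, rfl⟩
    · exact (htb i hi).1
    · exact (htb' i hi).1
    · positivity
  have hb1 : ∀ z ∈ L, z ≤ 1 := by
    intro z hz
    rcases (hmem z).mp hz with ⟨i, hi, rfl⟩ | ⟨i, hi, rfl⟩ | ⟨r, hr, rfl⟩
    · exact (htb i hi).2
    · exact (htb' i hi).2
    · rw [div_le_one hMR]
      exact_mod_cast hr
  have hmemt : ∀ i < α.length, t i ∈ L := fun i hi => (hmem _).mpr (Or.inl ⟨i, hi, rfl⟩)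
  have hmemt' : ∀ i < β.length, t' i ∈ L := fun i hi => (hmem _).mpr (Or.inr (Or.inl ⟨i, hi, rfl⟩))
  have hgrid : ∀ r : ℕ, r ≤ M → ((r:ℝ)/M) ∈ L := fun r hr => (hmem _).mpr (Or.inr (Or.inr ⟨r, hr, rfl⟩))
  have h0mem : (0:ℝ) ∈ L := by have := hmemt 0 hlα; rwa [ht0] at this
  have h1mem : (1:ℝ) ∈ L := by have := hmemt (α.length - 1) (by omega); rwa [ht1] at this
  have hLpos : 0 < L.length := List.length_pos_iff.mpr (List.ne_nil_of_mem h0mem)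
  set u : ℕ → ℝ := fun k => L.getD k 1 with hu
  set N : ℕ := L.length - 1 with hN
  have hu0 : u 0 = 0 := sortedL_zero L hLn hLs hb0 h0mem
  have huN : u N = 1 := sortedL_last L hLn hLs hb1 h1mem
  have hN1 : 1 ≤ N := by
    by_contra h
    have hN0 : N = 0 := by omega
    rw [hN0] at huN
    rw [huN] at hu0
    norm_num at hu0
  have humemIcc : ∀ k ≤ N, u k ∈ Set.Icc (0:ℝ) 1 := by
    intro k hk
    have hkl : k < L.length := by omega
    have : u k ∈ L := by
      rw [hu]; simp only
      rw [List.getD_eq_getElem L 1 hkl]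
      exact List.getElem_mem hkl
    exact ⟨hb0 _ this, hb1 _ this⟩
  have hmesh : ∀ k < N, |u (k+1) - u k| < δ := by
    intro k hk
    have h1 : u (k+1) - u k ≤ 1/M := sortedL_mesh L hLn hLs M hMR hb0 hb1 hgrid k (by omega)
    have h2 : u k < u (k+1) := sortedL_lt L hLn hLs k (k+1) (by omega) (by omega)
    rw [abs_of_pos (by linarith)]
    linarith
  -- I-valued grid
  set uI : ℕ → I := fun k => Set.projIcc 0 1 zero_le_one (u k) with huI
  have huIcoe : ∀ k ≤ N, (uI k : ℝ) = u k := by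
    intro k hk
    rw [huI]; simp only
    rw [Set.projIcc_of_mem _ (humemIcc k hk)]
  set sI : ℕ → I := fun j => Set.projIcc 0 1 zero_le_one ((j:ℝ)/M) with hsI
  have hsmem : ∀ j ≤ M, ((j:ℝ)/M) ∈ Set.Icc (0:ℝ) 1 := by
    intro j hj
    constructor
    · positivity
    · rw [div_le_one hMR]; exact_mod_cast hj
  have hsIcoe : ∀ j ≤ M, (sI j : ℝ) = (j:ℝ)/M := by
    intro j hj
    rw [hsI]; simp only
    rw [Set.projIcc_of_mem _ (hsmem j hj)]
  set G : ℕ → ℕ → X := fun j k => H (sI j, uI k) with hG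
  -- core estimate
  have hGd : ∀ j j' k k', j ≤ M → j' ≤ M → k ≤ N → k' ≤ N →
      |(j:ℝ)/M - (j':ℝ)/M| < δ → |u k - u k'| < δ → dist (G j k) (G j' k') < ε/2 := by
    intro j j' k k' hj hj' hk hk' hd1 hd2
    apply hHd
    rw [Prod.dist_eq, sup_lt_iff]
    constructor
    · rw [Subtype.dist_eq, hsIcoe j hj, hsIcoe j' hj', Real.dist_eq]
      exact hd1
    · rw [Subtype.dist_eq, huIcoe k hk, huIcoe k' hk', Real.dist_eq]
      exact hd2
  have hvert : ∀ j ≤ M, ∀ k < N, dist (G j k) (G j (k+1)) < ε/2 := by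
    intro j hj k hk
    apply hGd j j k (k+1) hj hj (by omega) (by omega)
    · simpa using hδ
    · rw [abs_sub_comm]; exact hmesh k hk
  have hhoriz : ∀ j < M, ∀ k ≤ N, dist (G j k) (G (j+1) k) < ε/2 := by
    intro j hj k hk
    apply hGd j (j+1) k k (by omega) (by omega) hk hk
    · have h2 : ((j:ℝ))/M - ((j+1:ℕ):ℝ)/M = -(1/(M:ℝ)) := by push_cast; ring
      rw [h2, abs_neg, abs_of_pos (by positivity)]
      exact hMδ
    · simpa using hδ
  have hcross : ∀ j < M, ∀ k < N, dist (G (j+1) k) (G j (k+1)) < ε/2 := by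
    intro j hj k hk
    apply hGd (j+1) j k (k+1) (by omega) (by omega) (by omega) (by omega)
    · have h2 : ((j+1:ℕ):ℝ)/M - ((j:ℝ))/M = 1/(M:ℝ) := by push_cast; ring
      rw [h2, abs_of_pos (by positivity)]
      exact hMδ
    · rw [abs_sub_comm]; exact hmesh k hk
  -- endpoints fixed
  have huI0 : uI 0 = (0 : I) := by
    apply Subtype.ext
    rw [huIcoe 0 (by omega), hu0]
    simp
  have huIN : uI N = (1 : I) := by
    apply Subtype.ext
    rw [huIcoe N le_rfl, huN]
    simp
  have hG0 : ∀ j, G j 0 = x := by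
    intro j
    rw [hG]; simp only [huI0]
    simpa using H.eq_fst (sI j) (show (0:I) ∈ ({0,1} : Set I) by simp)
  have hGN : ∀ j, G j N = y := by
    intro j
    rw [hG]; simp only [huIN]
    simpa using H.eq_fst (sI j) (show (1:I) ∈ ({0,1} : Set I) by simp)
  -- deformation across the homotopy
  have hhalf : ε/2 < ε := by linarith
  have hstepj : ∀ j < M, EpsHomotopic ε (ch (G j) N) (ch (G (j+1)) N) := by
    intro j hj
    apply epsHomotopic_deform (G j) (G (j+1)) N
    · exact fun k hk => lt_trans (hvert j (by omega) k hk) hhalf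
    · exact fun k hk => lt_trans (hvert (j+1) (by omega) k hk) hhalf
    · exact fun k hk => lt_trans (hhoriz j hj k hk) hhalf
    · exact fun k hk => lt_trans (hcross j hj k hk) hhalf
    · rw [hG0 j, hG0 (j+1)]
    · rw [hGN j, hGN (j+1)]
  have hdeform : ∀ j ≤ M, EpsHomotopic ε (ch (G 0) N) (ch (G j) N) := by
    intro j
    induction j with
    | zero => intro _; exact Relation.ReflTransGen.refl
    | succ j ih =>
      intro hj
      exact Relation.ReflTransGen.trans (ih (by omega)) (hstepj j (by omega))
  -- identify the end slices with samplings of the two paths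
  have hpt0 : ∀ k ≤ N, G 0 k = cα.extend (u k) := by
    intro k hk
    rw [hG]; simp only
    have hs0 : sI 0 = (0 : I) := by
      apply Subtype.ext
      rw [hsIcoe 0 (by omega)]
      simp
    have huIk : uI k = (⟨u k, humemIcc k hk⟩ : I) := Subtype.ext (by rw [huIcoe k hk])
    rw [hs0, huIk, H.apply_zero, Path.extend_apply cα (humemIcc k hk)]
    simp
  have hptM : ∀ k ≤ N, G M k = cβ.extend (u k) := by
    intro k hk
    rw [hG]; simp only
    have hsM : sI M = (1 : I) := by
      apply Subtype.ext
      rw [hsIcoe M le_rfl]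
      simp only [Set.Icc.coe_one]
      rw [div_self (ne_of_gt hMR)]
    have huIk : uI k = (⟨u k, humemIcc k hk⟩ : I) := Subtype.ext (by rw [huIcoe k hk])
    rw [hsM, huIk, H.apply_one, Path.extend_apply cβ (humemIcc k hk)]
    simp
  have hend0 : ch (G 0) N = ch (fun k => cα.extend (u k)) N := ch_congr hpt0
  have hendM : ch (G M) N = ch (fun k => cβ.extend (u k)) N := ch_congr hptM
  -- the two samplings
  have hfineα : ∀ k, k < L.length - 1 →
      dist (cα.extend (L.getD k 1)) (cα.extend (L.getD (k+1) 1)) < ε := by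
    intro k hk
    have h1 := hvert 0 (by omega) k (by omega)
    rw [hpt0 k (by omega), hpt0 (k+1) (by omega)] at h1
    exact lt_trans h1 hhalf
  have hfineβ : ∀ k, k < L.length - 1 →
      dist (cβ.extend (L.getD k 1)) (cβ.extend (L.getD (k+1) 1)) < ε := by
    intro k hk
    have h1 := hvert M le_rfl k (by omega)
    rw [hptM k (by omega), hptM (k+1) (by omega)] at h1
    exact lt_trans h1 hhalf
  have hsampα : EpsHomotopic ε (ch (fun k => cα.extend (L.getD k 1)) (L.length - 1)) α :=
    sample_side hε α hα cα t htm ht0 ht1 htpt htball L hLn hLs hb0 hb1 hmemt hfineα (by omega) x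
  have hsampβ : EpsHomotopic ε (ch (fun k => cβ.extend (L.getD k 1)) (L.length - 1)) β :=
    sample_side hε β hβ cβ t' htm' ht0' ht1' htpt' htball' L hLn hLs hb0 hb1 hmemt' hfineβ (by omega) x
  -- assemble
  have e1 : EpsHomotopic ε α (ch (G 0) N) := by
    rw [hend0]
    exact (epsHomotopic_equiv ε).symm hsampα
  have e2 : EpsHomotopic ε (ch (G M) N) β := by
    rw [hendM] at *
    exact hsampβ
  exact (e1.trans (hdeform M le_rfl)).trans e2
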